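/- Let X be a real Banach space that is isomorphic (via a continuous linear equivalence) to X × X, and let I be an ideal in L(X). Then I^† := { B∘S*∘A : S ∈ I, A, B ∈ L(X*) } is an ideal in L(X*): it is nonempty, closed under addition, and satisfies A'∘U∘B' ∈ I^† whenever U ∈ I^† and A', B' ∈ L(X*). -/

import Mathlib

open MeasureTheory NormedSpace

noncomputable section

/-- `I` is an ideal in the Banach algebra `L(X)`: it is nonempty, closed under addition,
and closed under composition with arbitrary bounded operators on both sides. -/
def IsOpIdeal {X : Type*} [NormedAddCommGroup X] [NormedSpace ℝ X]
    (I : Set (X →L[ℝ] X)) : Prop :=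
  I.Nonempty ∧ (∀ T ∈ I, ∀ S ∈ I, T + S ∈ I) ∧
    ∀ T ∈ I, ∀ A B : X →L[ℝ] X, A ∘L T ∘L B ∈ I

/-- The adjoint (dual map) `S* : Y* → X*` of a bounded operator `S : X → Y`. -/
def opDual {X Y : Type*} [NormedAddCommGroup X] [NormedSpace ℝ X]
    [NormedAddCommGroup Y] [NormedSpace ℝ Y] (S : X →L[ℝ] Y) :
    StrongDual ℝ Y →L[ℝ] StrongDual ℝ X :=
  (ContinuousLinearMap.compL ℝ X Y ℝ).flip S

/-- The set `I^† = { B ∘ S* ∘ A : S ∈ I, A, B ∈ L(X*) }` in `L(X*)`. -/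
def dagger {X : Type*} [NormedAddCommGroup X] [NormedSpace ℝ X]
    (I : Set (X →L[ℝ] X)) : Set (StrongDual ℝ X →L[ℝ] StrongDual ℝ X) :=
  {V | ∃ S ∈ I, ∃ A B : StrongDual ℝ X →L[ℝ] StrongDual ℝ X, V = B ∘L opDual S ∘L A}


lemma opDual_apply {X Y : Type*} [NormedAddCommGroup X] [NormedSpace ℝ X]
    [NormedAddCommGroup Y] [NormedSpace ℝ Y] (S : X →L[ℝ] Y) (φ : StrongDual ℝ Y) (x : X) :
    opDual S φ x = φ (S x) := rfl

/-- **Proposition.** If the Banach space `X` is isomorphic to its square `X × X` and `I`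
is an ideal in `L(X)`, then `I^† = { B ∘ S* ∘ A : S ∈ I, A, B ∈ L(X*) }` is an ideal
in `L(X*)`: it is nonempty, closed under addition, and closed under two-sided
composition with bounded operators on `X*`. -/
theorem dagger_isIdeal {X : Type*} [NormedAddCommGroup X] [NormedSpace ℝ X]
    (e : X ≃L[ℝ] X × X) (I : Set (X →L[ℝ] X)) (hI : IsOpIdeal I) :
    (dagger I).Nonempty ∧
      (∀ U ∈ dagger I, ∀ V ∈ dagger I, U + V ∈ dagger I) ∧
      (∀ U ∈ dagger I, ∀ A' B' : StrongDual ℝ X →L[ℝ] StrongDual ℝ X,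
        A' ∘L U ∘L B' ∈ dagger I) := by
  refine ⟨?_, ?_, ?_⟩
  · obtain ⟨S, hS⟩ := hI.1
    exact ⟨1 ∘L opDual S ∘L 1, S, hS, 1, 1, rfl⟩
  · rintro U ⟨S₁, hS₁, A₁, B₁, rfl⟩ V ⟨S₂, hS₂, A₂, B₂, rfl⟩
    set p₁ : X →L[ℝ] X := (ContinuousLinearMap.fst ℝ X X) ∘L (e : X →L[ℝ] X × X) with hp₁
    set p₂ : X →L[ℝ] X := (ContinuousLinearMap.snd ℝ X X) ∘L (e : X →L[ℝ] X × X) with hp₂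
    set j₁ : X →L[ℝ] X := (e.symm : X × X →L[ℝ] X) ∘L (ContinuousLinearMap.inl ℝ X X) with hj₁
    set j₂ : X →L[ℝ] X := (e.symm : X × X →L[ℝ] X) ∘L (ContinuousLinearMap.inr ℝ X X) with hj₂
    have hS : j₁ ∘L S₁ ∘L p₁ + j₂ ∘L S₂ ∘L p₂ ∈ I :=
      hI.2.1 _ (hI.2.2 _ hS₁ _ _) _ (hI.2.2 _ hS₂ _ _)
    refine ⟨_, hS, opDual p₁ ∘L A₁ + opDual p₂ ∘L A₂,
      B₁ ∘L opDual j₁ + B₂ ∘L opDual j₂, ?_⟩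
    refine ContinuousLinearMap.ext fun φ => ?_
    have key1 : opDual j₁ (opDual (j₁ ∘L S₁ ∘L p₁ + j₂ ∘L S₂ ∘L p₂)
        (opDual p₁ (A₁ φ) + opDual p₂ (A₂ φ))) = opDual S₁ (A₁ φ) := by
      ext x
      simp [opDual_apply, hp₁, hp₂, hj₁, hj₂]
    have key2 : opDual j₂ (opDual (j₁ ∘L S₁ ∘L p₁ + j₂ ∘L S₂ ∘L p₂)
        (opDual p₁ (A₁ φ) + opDual p₂ (A₂ φ))) = opDual S₂ (A₂ φ) := by
      ext x
      simp [opDual_apply, hp₁, hp₂, hj₁, hj₂]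
    simp only [ContinuousLinearMap.add_apply, ContinuousLinearMap.comp_apply, key1, key2]
  · rintro U ⟨S, hS, A, B, rfl⟩ A' B'
    exact ⟨S, hS, A ∘L B', A' ∘L B, rfl⟩
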